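/- Let U ⊆ ℝ_{≥0}^n be compact and upper convex, with: for each i there exists x ∈ U with x_i > 0. Then every Nash-welfare-maximizing vector x* ∈ U (maximizing ∏_i x_i) satisfies x*_i > 0 for all i, and is proportionally fair: (1/n)·∑_i y_i/x*_i ≤ 1 for all y ∈ U. -/

import Mathlib

open Filter Set Topology

theorem mnw_is_pf_of_compact_upper_convex {n : ℕ} (hn : 0 < n)
    (U : Set (Fin n → ℝ)) (hcomp : IsCompact U)
    (hnonneg : ∀ x ∈ U, ∀ i, 0 ≤ x i)
    (hposs : ∀ i : Fin n, ∃ x ∈ U, 0 < x i)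
    (hupper : ∀ x ∈ U, ∀ y ∈ U, ∀ α : ℝ, 0 ≤ α → α ≤ 1 →
        ∃ z ∈ U, ∀ i, z i ≥ α * x i + (1 - α) * y i)
    (x : Fin n → ℝ) (hx : x ∈ U)
    (hmax : ∀ y ∈ U, ∏ i, y i ≤ ∏ i, x i) :
    (∀ i, 0 < x i) ∧ (∀ y ∈ U, (1 / (n : ℝ)) * ∑ i, y i / x i ≤ 1) := by
  -- Step 1: produce a point of U with all coordinates positive
  have key : ∀ k : ℕ, k ≤ n → ∃ z ∈ U, ∀ i : Fin n, (i : ℕ) < k → 0 < z i := by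
    intro k
    induction k with
    | zero =>
      intro _
      obtain ⟨z, hz, -⟩ := hposs ⟨0, hn⟩
      exact ⟨z, hz, fun i h => absurd h (by omega)⟩
    | succ k ih =>
      intro hk
      obtain ⟨z, hzU, hz⟩ := ih (Nat.le_of_succ_le hk)
      obtain ⟨w, hwU, hw⟩ := hposs ⟨k, hk⟩
      obtain ⟨v, hvU, hv⟩ := hupper z hzU w hwU (1/2) (by norm_num) (by norm_num)
      refine ⟨v, hvU, fun i hi => ?_⟩
      have h1 := hnonneg z hzU i
      have h2 := hnonneg w hwU i
      have hvi := hv i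
      rcases Nat.lt_succ_iff_lt_or_eq.mp hi with h | h
      · have := hz i h; nlinarith
      · have hieq : i = ⟨k, hk⟩ := Fin.ext h
        rw [hieq] at h1 hvi ⊢
        nlinarith
  obtain ⟨z, hzU, hz⟩ := key n le_rfl
  have hzpos : ∀ i : Fin n, 0 < z i := fun i => hz i i.isLt
  have hxP : 0 < ∏ i, x i :=
    lt_of_lt_of_le (Finset.prod_pos fun i _ => hzpos i) (hmax z hzU)
  have hxpos : ∀ i, 0 < x i := by
    intro i
    rcases lt_or_eq_of_le (hnonneg x hx i) with h | h
    · exact h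
    · exfalso
      have : ∏ i, x i = 0 := Finset.prod_eq_zero (Finset.mem_univ i) h.symm
      linarith
  refine ⟨hxpos, ?_⟩
  intro y hy
  by_contra hcon
  push_neg at hcon
  have hnR : (0:ℝ) < n := Nat.cast_pos.mpr hn
  have hS : (n:ℝ) < ∑ i, y i / x i := by
    rw [one_div, inv_mul_eq_div, lt_div_iff₀ hnR, one_mul] at hcon
    exact hcon
  -- the product function and its derivative at 1
  set g : ℝ → ℝ := fun α => ∏ i, (α * x i + (1 - α) * y i) with hgdef
  have hder : ∀ i : Fin n, HasDerivAt (fun α : ℝ => α * x i + (1 - α) * y i)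
      (x i - y i) (1:ℝ) := by
    intro i
    have h := ((hasDerivAt_id (1:ℝ)).mul_const (x i)).add
      (((hasDerivAt_const (1:ℝ) (1:ℝ)).sub (hasDerivAt_id 1)).mul_const (y i))
    exact h.congr_deriv (by ring)
  have hg : HasDerivAt g
      (∑ i, (∏ j ∈ Finset.univ.erase i, ((1:ℝ) * x j + (1 - 1) * y j)) • (x i - y i)) 1 :=
    HasDerivAt.fun_finsetProd (fun i _ => hder i)
  set D : ℝ := ∑ i, (∏ j ∈ Finset.univ.erase i, ((1:ℝ) * x j + (1 - 1) * y j)) • (x i - y i)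
    with hDdef
  have hDval : D = (n : ℝ) * (∏ j, x j) - (∏ j, x j) * ∑ i, y i / x i := by
    rw [hDdef]
    have step : ∀ i : Fin n,
        (∏ j ∈ Finset.univ.erase i, ((1:ℝ) * x j + (1 - 1) * y j)) • (x i - y i)
        = (∏ j, x j) - (∏ j, x j) * (y i / x i) := by
      intro i
      have he : (∏ j ∈ Finset.univ.erase i, ((1:ℝ) * x j + (1 - 1) * y j))
          = ∏ j ∈ Finset.univ.erase i, x j := by
        apply Finset.prod_congr rfl; intro j _; ring
      have hpe : (∏ j ∈ Finset.univ.erase i, x j) * x i = ∏ j, x j :=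
        Finset.prod_erase_mul _ _ (Finset.mem_univ i)
      have hxi : x i ≠ 0 := (hxpos i).ne'
      rw [smul_eq_mul, he, ← hpe]
      field_simp
    rw [Finset.sum_congr rfl (fun i _ => step i), Finset.sum_sub_distrib,
      Finset.sum_const, ← Finset.mul_sum]
    simp [Finset.card_univ, mul_comm]
  have hDneg : D < 0 := by
    rw [hDval]; nlinarith
  -- slope argument
  have hslope := hasDerivAt_iff_tendsto_slope.mp hg
  have hmono : 𝓝[<] (1:ℝ) ≤ 𝓝[≠] (1:ℝ) :=
    nhdsWithin_mono _ (fun a ha => ne_of_lt ha)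
  have h1 : ∀ᶠ α in 𝓝[<] (1:ℝ), slope g 1 α < 0 :=
    (hslope.mono_left hmono).eventually_lt_const hDneg
  have h2 : ∀ᶠ α in 𝓝[<] (1:ℝ), α ∈ Set.Ioo (0:ℝ) 1 :=
    eventually_of_mem (Ioo_mem_nhdsLT_of_mem (by norm_num : (1:ℝ) ∈ Set.Ioc 0 1))
      (fun a ha => ha)
  obtain ⟨α, hs, hα⟩ := (h1.and h2).exists
  have hg1 : g 1 = ∏ i, x i := by
    rw [hgdef]; apply Finset.prod_congr rfl; intro j _; ring
  have hgα : g α > ∏ i, x i := by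
    have hne : α - 1 < 0 := by linarith [hα.2]
    have hsv : (g α - g 1) / (α - 1) < 0 := by
      simpa [slope_def_field, div_eq_iff] using hs
    rw [div_neg_iff] at hsv
    rcases hsv with ⟨h3, h4⟩ | ⟨h3, h4⟩
    · linarith
    · linarith [hg1 ▸ h3]
  obtain ⟨v, hvU, hv⟩ := hupper x hx y hy α hα.1.le hα.2.le
  have hle : g α ≤ ∏ i, v i := by
    apply Finset.prod_le_prod
    · intro i _
      have := hnonneg y hy i
      have := (hxpos i).le
      have h0 : 0 ≤ α := hα.1.le
      have h01 : 0 ≤ 1 - α := by linarith [hα.2]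
      positivity
    · intro i _; exact hv i
  have := hmax v hvU
  linarith
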